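/- For every k, l, t ≥ 1 and d ≥ 2, if there exists a family of N binary vectors of length k+l+t such that no two distinct vectors share k common positions of ones and no two share l common positions of zeros, then there exists a real array of size (k+l+t) × (d-1)^N containing neither a k × d subarray whose columns form an increasing sequence of vectors in R^k nor an l × d subarray whose columns form a decreasing sequence of vectors in R^l. -/

import Mathlib

open Finset

def Anat (b N : ℕ) (e : ℕ → Bool) (x : ℕ) : ℕ :=
  ∑ i ∈ Finset.range N, (if e i then x / b^i % b else b - 1 - x / b^i % b) * b^i

lemma sum_digits (b : ℕ) (hb : 2 ≤ b) : ∀ (N x : ℕ), x < b^N →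
    ∑ i ∈ Finset.range N, (x / b^i % b) * b^i = x := by
  intro N
  induction N with
  | zero => intro x hx; simp at hx ⊢; omega
  | succ N ih =>
    intro x hx
    rw [Finset.sum_range_succ']
    have h1 : ∀ i, x / b^(i+1) % b * b^(i+1) = b * ((x / b) / b^i % b * b^i) := by
      intro i
      rw [pow_succ', ← Nat.div_div_eq_div_mul]
      ring
    simp only [h1]
    rw [← Finset.mul_sum, ih (x / b) (by rw [pow_succ'] at hx; exact Nat.div_lt_of_lt_mul hx)]
    simpa using Nat.div_add_mod x b

lemma val_lt (b : ℕ) (hb : 2 ≤ b) : ∀ (N : ℕ) (f : ℕ → ℕ), (∀ i, i < N → f i < b) →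
    ∑ i ∈ Finset.range N, f i * b^i < b^N := by
  intro N
  induction N with
  | zero => intro f _; simp
  | succ N ih =>
    intro f hf
    rw [Finset.sum_range_succ]
    have h1 : ∑ i ∈ Finset.range N, f i * b^i < b^N := ih f (fun i hi => hf i (by omega))
    have h2 : f N * b^N ≤ (b-1) * b^N :=
      Nat.mul_le_mul_right _ (by have := hf N (by omega); omega)
    have h3 : b^(N+1) = b * b^N := by rw [pow_succ]; ring
    have h4 : (b-1) * b^N + b^N = b * b^N := by
      have : b - 1 + 1 = b := by omega
      calc (b-1) * b^N + b^N = (b - 1 + 1) * b^N := by ring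
        _ = b * b^N := by rw [this]
    omega

lemma val_lt_val (b : ℕ) (hb : 2 ≤ b) (N s : ℕ) (hs : s < N) (f g : ℕ → ℕ)
    (hf : ∀ i, i < N → f i < b) (hg : ∀ i, i < N → g i < b)
    (hagree : ∀ i, s < i → i < N → f i = g i) (hfs : f s < g s) :
    ∑ i ∈ Finset.range N, f i * b^i < ∑ i ∈ Finset.range N, g i * b^i := by
  have hsplit : ∀ h : ℕ → ℕ, ∑ i ∈ Finset.range N, h i * b^i =
      ∑ i ∈ Finset.range (s+1), h i * b^i + ∑ i ∈ Finset.Ico (s+1) N, h i * b^i := by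
    intro h
    rw [Finset.range_eq_Ico, ← Finset.sum_Ico_consecutive _ (by omega : 0 ≤ s+1) (by omega : s+1 ≤ N)]
    rw [← Finset.range_eq_Ico]

  rw [hsplit f, hsplit g]
  have htail : ∑ i ∈ Finset.Ico (s+1) N, f i * b^i = ∑ i ∈ Finset.Ico (s+1) N, g i * b^i := by
    apply Finset.sum_congr rfl
    intro i hi
    rw [Finset.mem_Ico] at hi
    rw [hagree i (by omega) hi.2]
  rw [htail]
  have hhead : ∑ i ∈ Finset.range (s+1), f i * b^i < ∑ i ∈ Finset.range (s+1), g i * b^i := by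
    rw [Finset.sum_range_succ, Finset.sum_range_succ]
    have h1 : ∑ i ∈ Finset.range s, f i * b^i < b^s := val_lt b hb s f (fun i hi => hf i (by omega))
    have h2 : (f s + 1) * b^s ≤ g s * b^s := Nat.mul_le_mul_right _ (by omega)
    have h3 : 0 ≤ ∑ i ∈ Finset.range s, g i * b^i := Nat.zero_le _
    nlinarith [h1, h2, h3]
  omega

lemma top_digit (b : ℕ) (hb : 2 ≤ b) (N x y : ℕ) (hx : x < b^N) (hy : y < b^N)
    (hxy : x < y) : ∃ s, s < N ∧ x / b^s % b < y / b^s % b ∧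
      ∀ i, s < i → i < N → x / b^i % b = y / b^i % b := by
  have hdig : ∀ z i, z / b^i % b < b := fun z i => Nat.mod_lt _ (by omega)
  set D := (Finset.range N).filter (fun i => x / b^i % b ≠ y / b^i % b) with hD
  have hne : D.Nonempty := by
    by_contra hc
    rw [Finset.not_nonempty_iff_eq_empty] at hc
    have : ∀ i ∈ Finset.range N, x / b^i % b * b^i = y / b^i % b * b^i := by
      intro i hi
      have : i ∉ D := by rw [hc]; exact Finset.notMem_empty i
      rw [hD, Finset.mem_filter] at this
      push_neg at this
      rw [this hi]
    have := Finset.sum_congr rfl this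
    rw [sum_digits b hb N x hx, sum_digits b hb N y hy] at this
    omega
  set s := D.max' hne with hsdef
  have hsD : s ∈ D := D.max'_mem hne
  rw [hD, Finset.mem_filter, Finset.mem_range] at hsD
  have hagree : ∀ i, s < i → i < N → x / b^i % b = y / b^i % b := by
    intro i hsi hiN
    by_contra hc
    have : i ∈ D := by rw [hD, Finset.mem_filter, Finset.mem_range]; exact ⟨hiN, hc⟩
    have := D.le_max' i this
    omega
  refine ⟨s, hsD.1, ?_, hagree⟩
  rcases Nat.lt_trichotomy (x / b^s % b) (y / b^s % b) with h | h | h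
  · exact h
  · exact absurd h hsD.2
  · exfalso
    have := val_lt_val b hb N s hsD.1 (fun i => y / b^i % b) (fun i => x / b^i % b)
      (fun i _ => hdig y i) (fun i _ => hdig x i)
      (fun i h1 h2 => (hagree i h1 h2).symm) h
    rw [sum_digits b hb N x hx, sum_digits b hb N y hy] at this
    omega

lemma key_lemma (b N m : ℕ) (hb : 2 ≤ b) (e : Fin m → ℕ → Bool) (c : ℕ → ℕ)
    (hcb : ∀ j, j ≤ b → c j < b^N)
    (hc : ∀ j, j < b → c j < c (j+1))
    (hmono : ∀ j, j < b → ∀ i : Fin m, Anat b N (e i) (c j) ≤ Anat b N (e i) (c (j+1))) :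
    ∃ s s', s < N ∧ s' < N ∧ s ≠ s' ∧ (∀ i, e i s = true) ∧ (∀ i, e i s' = true) := by
  have hdig : ∀ z i, z / b^i % b < b := fun z i => Nat.mod_lt _ (by omega)
  have htop : ∀ j : ℕ, ∃ s, j < b → s < N ∧ c j / b^s % b < c (j+1) / b^s % b ∧
      ∀ i, s < i → i < N → c j / b^i % b = c (j+1) / b^i % b := by
    intro j
    by_cases hj : j < b
    · obtain ⟨s, h1, h2, h3⟩ := top_digit b hb N (c j) (c (j+1))
        (hcb j (by omega)) (hcb (j+1) (by omega)) (hc j hj)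
      exact ⟨s, fun _ => ⟨h1, h2, h3⟩⟩
    · exact ⟨0, fun h => absurd h hj⟩
  choose s hs using htop
  -- every used scale forces bit true on every row
  have htrue : ∀ j, j < b → ∀ i : Fin m, e i (s j) = true := by
    intro j hj i
    obtain ⟨hsN, hlt, hagree⟩ := hs j hj
    by_contra hfalse
    rw [Bool.not_eq_true] at hfalse
    have hrev : Anat b N (e i) (c (j+1)) < Anat b N (e i) (c j) := by
      apply val_lt_val b hb N (s j) hsN
      · intro i' _
        split
        · exact hdig _ _
        · have := hdig (c (j+1)) i'; omega
      · intro i' _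
        split
        · exact hdig _ _
        · have := hdig (c j) i'; omega
      · intro i' h1 h2
        rw [hagree i' h1 h2]
      · rw [hfalse]
        simp only [Bool.false_eq_true, if_false]
        have h1 := hdig (c j) (s j)
        have h2 := hdig (c (j+1)) (s j)
        omega
    have := hmono j hj i
    omega
  -- two distinct scales
  have hdist : ∃ j j', j < b ∧ j' < b ∧ s j ≠ s j' := by
    by_contra hall
    push_neg at hall
    have hsame : ∀ j, j < b → s j = s 0 := fun j hj => hall j 0 hj (by omega)
    have hmonodig : ∀ j, j ≤ b → j ≤ c j / b^(s 0) % b := by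
      intro j
      induction j with
      | zero => intro _; omega
      | succ j ih =>
        intro hjb
        have hj : j < b := by omega
        obtain ⟨hsN, hlt, _⟩ := hs j hj
        rw [hsame j hj] at hlt
        have := ih (by omega)
        omega
    have h1 := hmonodig b (le_refl b)
    have h2 := hdig (c b) (s 0)
    omega
  obtain ⟨j, j', hj, hj', hne⟩ := hdist
  exact ⟨s j, s j', (hs j hj).1, (hs j' hj').1, hne, htrue j hj, htrue j' hj'⟩

lemma Anat_compl (b N : ℕ) (hb : 2 ≤ b) (e : ℕ → Bool) (x : ℕ) :
    Anat b N e x + Anat b N (fun i => !(e i)) x = ∑ i ∈ Finset.range N, (b-1) * b^i := by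
  unfold Anat
  rw [← Finset.sum_add_distrib]
  apply Finset.sum_congr rfl
  intro i _
  have hdig : x / b^i % b < b := Nat.mod_lt _ (by omega)
  rw [← add_mul]
  congr 1
  cases he : e i <;> simp [he] <;> omega

/-- If there is a family of N binary vectors of length k+l+t in which no two
distinct vectors share k common ones and no two share l common zeros, then
there is a real array of size (k+l+t) × (d-1)^N with no k × d subarray whose
columns increase in ℝ^k and no l × d subarray whose columns decrease in ℝ^l. -/
theorem family_to_array (k l t N d : ℕ) (hk : 1 ≤ k) (hl : 1 ≤ l) (ht : 1 ≤ t)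
    (hd : 2 ≤ d)
    (hF : ∃ F : Finset (Fin (k + l + t) → Bool), F.card = N ∧
      (∀ u ∈ F, ∀ v ∈ F, u ≠ v →
        ¬ ∃ s : Finset (Fin (k + l + t)), s.card = k ∧ ∀ i ∈ s, u i = true ∧ v i = true) ∧
      (∀ u ∈ F, ∀ v ∈ F, u ≠ v →
        ¬ ∃ s : Finset (Fin (k + l + t)), s.card = l ∧ ∀ i ∈ s, u i = false ∧ v i = false)) :
    ∃ A : Fin (k + l + t) → Fin ((d - 1) ^ N) → ℝ,
      (¬ ∃ r : Fin k → Fin (k + l + t), ∃ c : Fin d → Fin ((d - 1) ^ N),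
          StrictMono r ∧ StrictMono c ∧
          ∀ j j' : Fin d, j ≤ j' → ∀ i : Fin k, A (r i) (c j) ≤ A (r i) (c j')) ∧
      (¬ ∃ r : Fin l → Fin (k + l + t), ∃ c : Fin d → Fin ((d - 1) ^ N),
          StrictMono r ∧ StrictMono c ∧
          ∀ j j' : Fin d, j ≤ j' → ∀ i : Fin l, A (r i) (c j') ≤ A (r i) (c j)) := by
  by_cases hb2 : 2 ≤ d - 1
  case neg =>
    -- d = 2, so (d-1)^N = 1 and there is no strictly monotone map Fin d → Fin 1
    have hone : (d - 1) ^ N = 1 := by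
      have : d - 1 = 1 := by omega
      rw [this, one_pow]
    refine ⟨fun _ _ => 0, ?_, ?_⟩ <;>
    · rintro ⟨r, c, hr, hc, _⟩
      have h01 : (⟨0, by omega⟩ : Fin d) < ⟨1, by omega⟩ := Fin.mk_lt_mk.mpr (by omega)
      have := hc h01
      rw [Fin.lt_def] at this
      have ha := (c ⟨0, by omega⟩).isLt
      have hb' := (c ⟨1, by omega⟩).isLt
      omega
  case pos =>
    obtain ⟨F, hcard, h1s, h0s⟩ := hF
    have heqv := F.equivFinOfCardEq hcard
    set E : Fin N → (Fin (k+l+t) → Bool) := fun i => ((heqv.symm i : F) : Fin (k+l+t) → Bool)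
      with hE
    have hEmem : ∀ i, E i ∈ F := fun i => (heqv.symm i).2
    have hEinj : Function.Injective E := by
      intro a b h
      have : (heqv.symm a : F) = (heqv.symm b : F) := Subtype.coe_injective h
      exact heqv.symm.injective this
    set Efun : ℕ → Fin (k+l+t) → Bool := fun i ρ => if h : i < N then E ⟨i, h⟩ ρ else true
      with hEfun
    refine ⟨fun ρ x => ((Anat (d-1) N (fun i => Efun i ρ) (x : ℕ) : ℕ) : ℝ), ?_, ?_⟩
    · -- no increasing k × d subarray
      rintro ⟨r, c, hr, hc, hmono⟩
      set c' : ℕ → ℕ := fun j => if h : j < d then ((c ⟨j, h⟩ : Fin ((d-1)^N)) : ℕ) else 0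
        with hc'
      have hc'eq : ∀ jf : Fin d, c' (jf : ℕ) = ((c jf : Fin ((d-1)^N)) : ℕ) := by
        intro jf
        simp only [hc']
        rw [dif_pos jf.isLt]
      have hcb : ∀ j, j ≤ d - 1 → c' j < (d-1)^N := by
        intro j hj
        have h0 : c' j = ((c ⟨j, by omega⟩ : Fin ((d-1)^N)) : ℕ) := hc'eq ⟨j, by omega⟩
        rw [h0]
        exact (c _).isLt
      have hcc : ∀ j, j < d - 1 → c' j < c' (j+1) := by
        intro j hj
        have h0 : c' j = ((c ⟨j, by omega⟩ : Fin ((d-1)^N)) : ℕ) := hc'eq ⟨j, by omega⟩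
        have h1 : c' (j+1) = ((c ⟨j+1, by omega⟩ : Fin ((d-1)^N)) : ℕ) := hc'eq ⟨j+1, by omega⟩
        rw [h0, h1]
        exact hc (Fin.mk_lt_mk.mpr (by omega))
      have hmono' : ∀ j, j < d - 1 → ∀ i : Fin k,
          Anat (d-1) N (fun s => Efun s (r i)) (c' j) ≤
          Anat (d-1) N (fun s => Efun s (r i)) (c' (j+1)) := by
        intro j hj i
        have h0 : c' j = ((c ⟨j, by omega⟩ : Fin ((d-1)^N)) : ℕ) := hc'eq ⟨j, by omega⟩
        have h1 : c' (j+1) = ((c ⟨j+1, by omega⟩ : Fin ((d-1)^N)) : ℕ) := hc'eq ⟨j+1, by omega⟩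
        have hm := hmono ⟨j, by omega⟩ ⟨j+1, by omega⟩ (Fin.mk_le_mk.mpr (by omega)) i
        rw [Nat.cast_le] at hm
        rw [h0, h1]
        exact hm
      obtain ⟨s, s', hsN, hs'N, hne, htr, htr'⟩ :=
        key_lemma (d-1) N k hb2 (fun i sc => Efun sc (r i)) c' hcb hcc hmono'
      refine h1s (E ⟨s, hsN⟩) (hEmem _) (E ⟨s', hs'N⟩) (hEmem _)
        (fun h => hne (congrArg Fin.val (hEinj h)))
        ⟨Finset.image r Finset.univ, ?_, ?_⟩
      · rw [Finset.card_image_of_injective _ hr.injective, Finset.card_univ, Fintype.card_fin]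
      · intro i0 hi0
        obtain ⟨i, _, rfl⟩ := Finset.mem_image.mp hi0
        have h1 := htr i
        have h2 := htr' i
        simp only [hEfun, dif_pos hsN, dif_pos hs'N] at h1 h2 ⊢
        exact ⟨h1, h2⟩
    · -- no decreasing l × d subarray
      rintro ⟨r, c, hr, hc, hmono⟩
      set c' : ℕ → ℕ := fun j => if h : j < d then ((c ⟨j, h⟩ : Fin ((d-1)^N)) : ℕ) else 0
        with hc'
      have hc'eq : ∀ jf : Fin d, c' (jf : ℕ) = ((c jf : Fin ((d-1)^N)) : ℕ) := by
        intro jf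
        simp only [hc']
        rw [dif_pos jf.isLt]
      have hcb : ∀ j, j ≤ d - 1 → c' j < (d-1)^N := by
        intro j hj
        have h0 : c' j = ((c ⟨j, by omega⟩ : Fin ((d-1)^N)) : ℕ) := hc'eq ⟨j, by omega⟩
        rw [h0]
        exact (c _).isLt
      have hcc : ∀ j, j < d - 1 → c' j < c' (j+1) := by
        intro j hj
        have h0 : c' j = ((c ⟨j, by omega⟩ : Fin ((d-1)^N)) : ℕ) := hc'eq ⟨j, by omega⟩
        have h1 : c' (j+1) = ((c ⟨j+1, by omega⟩ : Fin ((d-1)^N)) : ℕ) := hc'eq ⟨j+1, by omega⟩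
        rw [h0, h1]
        exact hc (Fin.mk_lt_mk.mpr (by omega))
      have hmono' : ∀ j, j < d - 1 → ∀ i : Fin l,
          Anat (d-1) N (fun s => !(Efun s (r i))) (c' j) ≤
          Anat (d-1) N (fun s => !(Efun s (r i))) (c' (j+1)) := by
        intro j hj i
        have h0 : c' j = ((c ⟨j, by omega⟩ : Fin ((d-1)^N)) : ℕ) := hc'eq ⟨j, by omega⟩
        have h1 : c' (j+1) = ((c ⟨j+1, by omega⟩ : Fin ((d-1)^N)) : ℕ) := hc'eq ⟨j+1, by omega⟩
        have hm := hmono ⟨j, by omega⟩ ⟨j+1, by omega⟩ (Fin.mk_le_mk.mpr (by omega)) i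
        rw [Nat.cast_le] at hm
        rw [h0, h1]
        have e1 := Anat_compl (d-1) N hb2 (fun s => Efun s (r i))
          ((c ⟨j, by omega⟩ : Fin ((d-1)^N)) : ℕ)
        have e2 := Anat_compl (d-1) N hb2 (fun s => Efun s (r i))
          ((c ⟨j+1, by omega⟩ : Fin ((d-1)^N)) : ℕ)
        omega
      obtain ⟨s, s', hsN, hs'N, hne, htr, htr'⟩ :=
        key_lemma (d-1) N l hb2 (fun i sc => !(Efun sc (r i))) c' hcb hcc hmono'
      refine h0s (E ⟨s, hsN⟩) (hEmem _) (E ⟨s', hs'N⟩) (hEmem _)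
        (fun h => hne (congrArg Fin.val (hEinj h)))
        ⟨Finset.image r Finset.univ, ?_, ?_⟩
      · rw [Finset.card_image_of_injective _ hr.injective, Finset.card_univ, Fintype.card_fin]
      · intro i0 hi0
        obtain ⟨i, _, rfl⟩ := Finset.mem_image.mp hi0
        have h1 := htr i
        have h2 := htr' i
        simp only [hEfun, dif_pos hsN, dif_pos hs'N, Bool.not_eq_true'] at h1 h2
        exact ⟨h1, h2⟩
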